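/- The inverse of the matrix A (with A_{ii} = −γ_i/(Σ_{k=1}^{i} γ_k), A_{ij} = γ_i(1/Σ_{k=1}^{j−1} γ_k − 1/Σ_{k=1}^{j} γ_k) for i < j, and 0 for i > j) is the upper triangular matrix B with B_{ii} = −(Σ_{k=1}^{i} γ_k)/γ_i, B_{ij} = −1 for i < j, and B_{ij} = 0 for i > j. -/

import Mathlib

open Finset

/-- The upper triangular demand matrix `A`. -/
noncomputable def Amat {n : ℕ} (γ : Fin n → ℝ) : Matrix (Fin n) (Fin n) ℝ :=
  Matrix.of fun i j =>
    if i = j then -γ i / ∑ k ∈ Iic i, γ k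
    else if i < j then γ i * (1 / ∑ k ∈ Iio j, γ k - 1 / ∑ k ∈ Iic j, γ k)
    else 0

/-- The claimed inverse `B` of `A`: diagonal `-(Σ_{k ≤ i} γ_k)/γ_i`, `-1` above
the diagonal, `0` below. -/
noncomputable def Bmat {n : ℕ} (γ : Fin n → ℝ) : Matrix (Fin n) (Fin n) ℝ :=
  Matrix.of fun i j =>
    if i = j then -(∑ k ∈ Iic i, γ k) / γ i
    else if i < j then -1
    else 0

lemma Ssum_pos {n : ℕ} (γ : Fin n → ℝ) (hγ : ∀ i, 0 < γ i) (j : Fin n) :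
    0 < ∑ k ∈ Iic j, γ k :=
  Finset.sum_pos (fun k _ => hγ k) ⟨j, mem_Iic.mpr le_rfl⟩

lemma Bmat_mul_Amat {n : ℕ} (γ : Fin n → ℝ) (hγ : ∀ i, 0 < γ i) :
    Bmat γ * Amat γ = 1 := by
  ext i j
  rw [Matrix.mul_apply]
  rcases lt_trichotomy i j with hij | rfl | hij
  · -- i < j : entry is 0
    rw [Matrix.one_apply_ne (ne_of_lt hij)]
    have h0 : ∀ k ∈ (Finset.univ : Finset (Fin n)), k ∉ Icc i j →
        Bmat γ i k * Amat γ k j = 0 := by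
      intro k _ hk
      rw [mem_Icc, not_and_or] at hk
      rcases hk with hk | hk
      · have h1 : ¬ i = k := by intro h; exact hk (le_of_eq h)
        have h2 : ¬ i < k := fun h => hk h.le
        simp [Bmat, h1, h2]
      · have h3 : k ≠ j := by intro h; subst h; exact hk le_rfl
        have h4 : ¬ k < j := by intro h; exact hk h.le
        simp [Amat, h3, h4]
    rw [← Finset.sum_subset (Finset.subset_univ (Icc i j)) h0]
    have hji : j ∉ Ico i j := by simp
    rw [← Finset.Ico_insert_right hij.le, Finset.sum_insert hji]
    have hii : i ∉ Ioo i j := by simp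
    rw [← Finset.Ioo_insert_left hij, Finset.sum_insert hii]
    have hBij : Bmat γ i j = -1 := by simp [Bmat, ne_of_lt hij, hij]
    have hAjj : Amat γ j j = -γ j / ∑ k ∈ Iic j, γ k := by simp [Amat]
    have hBii : Bmat γ i i = -(∑ k ∈ Iic i, γ k) / γ i := by simp [Bmat]
    have hAij : Amat γ i j = γ i * (1 / ∑ k ∈ Iio j, γ k - 1 / ∑ k ∈ Iic j, γ k) := by
      simp [Amat, ne_of_lt hij, hij]
    have hmid : ∀ k ∈ Ioo i j, Bmat γ i k * Amat γ k j =
        -(γ k * (1 / ∑ m ∈ Iio j, γ m - 1 / ∑ m ∈ Iic j, γ m)) := by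
      intro k hk
      rw [mem_Ioo] at hk
      have h1 : ¬ i = k := ne_of_lt hk.1
      have h2 : ¬ k = j := ne_of_lt hk.2
      simp only [Bmat, Amat, Matrix.of_apply, if_neg h1, if_pos hk.1, if_neg h2,
        if_pos hk.2]
      ring
    rw [Finset.sum_congr rfl hmid, hBij, hAjj, hBii, hAij]
    have hsplit : (Iio j : Finset (Fin n)) = Iic i ∪ Ioo i j := by
      ext k
      simp only [mem_Iio, mem_union, mem_Iic, mem_Ioo]
      constructor
      · intro h
        rcases le_or_gt k i with h' | h'
        · exact Or.inl h'
        · exact Or.inr ⟨h', h⟩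
      · rintro (h | ⟨_, h⟩)
        · exact lt_of_le_of_lt h hij
        · exact h
    have hdisj : Disjoint (Iic i) (Ioo i j) := by
      rw [Finset.disjoint_left]
      intro k hk hk'
      rw [mem_Iic] at hk; rw [mem_Ioo] at hk'
      exact absurd hk (not_le.mpr hk'.1)
    have hIio : ∑ k ∈ Iio j, γ k = ∑ k ∈ Iic i, γ k + ∑ k ∈ Ioo i j, γ k := by
      rw [hsplit, Finset.sum_union hdisj]
    have hIic : ∑ k ∈ Iic j, γ k = ∑ k ∈ Iio j, γ k + γ j := by
      have : (Iic j : Finset (Fin n)) = insert j (Iio j) := by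
        rw [Finset.Iio_insert]
      rw [this, Finset.sum_insert (by simp)]
      ring
    have hP : 0 < ∑ k ∈ Iio j, γ k := by
      apply Finset.sum_pos (fun k _ => hγ k) ⟨i, mem_Iio.mpr hij⟩
    have hS : 0 < ∑ k ∈ Iic j, γ k := Ssum_pos γ hγ j
    have hgi := hγ i
    set P := ∑ k ∈ Iio j, γ k
    set S := ∑ k ∈ Iic j, γ k
    set Si := ∑ k ∈ Iic i, γ k
    have hM : ∑ k ∈ Ioo i j, γ k = P - Si := by rw [hIio]; ring
    have hsum2 : ∑ x ∈ Ioo i j, -(γ x * (1 / P - 1 / S)) =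
        (P - Si) * (-(1 / P - 1 / S)) := by
      rw [← hM, Finset.sum_mul]
      apply Finset.sum_congr rfl
      intro x _; ring
    rw [hsum2, hIic]
    have hPne : P ≠ 0 := hP.ne'
    have hgj := hγ j
    have hSne : P + γ j ≠ 0 := by positivity
    field_simp
    ring
  · -- i = i : entry is 1
    rw [Matrix.one_apply_eq]
    rw [Finset.sum_eq_single i]
    · have hS := Ssum_pos γ hγ i
      have hgi := hγ i
      simp only [Bmat, Amat, Matrix.of_apply, if_pos rfl, ite_true]
      field_simp
    · intro k _ hk
      rcases lt_or_gt_of_ne hk with h | h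
      · have h1 : ¬ i = k := h.ne'
        have h2 : ¬ i < k := h.asymm
        simp [Bmat, h1, h2]
      · have h1 : ¬ k = i := h.ne'
        have h2 : ¬ k < i := h.asymm
        simp [Amat, h1, h2]
    · intro h; exact absurd (Finset.mem_univ i) h
  · -- j < i : entry is 0
    rw [Matrix.one_apply_ne (ne_of_gt hij)]
    apply Finset.sum_eq_zero
    intro k _
    rcases lt_or_ge k i with h | h
    · have h1 : ¬ i = k := h.ne'
      have h2 : ¬ i < k := h.asymm
      simp [Bmat, h1, h2]
    · have hkj : j < k := lt_of_lt_of_le hij h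
      have h1 : ¬ k = j := hkj.ne'
      have h2 : ¬ k < j := hkj.asymm
      simp [Amat, h1, h2]

/-- `B` is the two-sided inverse of `A`. -/
theorem Amat_mul_Bmat {n : ℕ} (γ : Fin n → ℝ) (hγ : ∀ i, 0 < γ i) :
    Amat γ * Bmat γ = 1 ∧ Bmat γ * Amat γ = 1 := by
  have h := Bmat_mul_Amat γ hγ
  exact ⟨mul_eq_one_comm.mp h, h⟩
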